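/- Let g be an entire function on ℂ whose zero set is exactly the lattice ℤ + iℤ, all zeros simple. Let μ ∈ ℝ^m, μ ≠ 0, and t ∈ ℝ, and set λ = tμ. Then there exists an entire function F on ℂ^m having the same divisor as z ↦ g(⟨z,λ⟩ + i⟨z,μ⟩) (i.e., g(⟨z,λ⟩ + i⟨z,μ⟩) = u(z)·F(z) for some zero-free entire u on ℂ^m) such that |F| is almost periodic on ℂ^m, i.e., the restriction of |F| to every tube T_K = {x+iy : x ∈ ℝ^m, y ∈ K}, K ⊂ ℝ^m compact, is almost periodic. -/

import Mathlib

open MeasureTheory Filter Complex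

noncomputable section

/-- Embedding of a real vector into `ℂ^m`. -/
def toC {m : ℕ} (t : Fin m → ℝ) : Fin m → ℂ := fun j => (t j : ℂ)

/-- The tube set `T_S = {z = x + iy : x ∈ ℝ^m, y ∈ S}` over a base `S ⊆ ℝ^m`. -/
def tube {m : ℕ} (S : Set (Fin m → ℝ)) : Set (Fin m → ℂ) :=
  {z : Fin m → ℂ | (fun j => (z j).im) ∈ S}

/-- `f` is almost periodic on a set `T ⊆ ℂ^m` (w.r.t. real shifts): every sequence of
real shifts has a subsequence converging uniformly on `T`. -/
def APOn {m : ℕ} {E : Type*} [NormedAddCommGroup E]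
    (f : (Fin m → ℂ) → E) (T : Set (Fin m → ℂ)) : Prop :=
  ∀ h : ℕ → (Fin m → ℝ), ∃ σ : ℕ → ℕ, StrictMono σ ∧ ∃ g : (Fin m → ℂ) → E,
    TendstoUniformlyOn (fun n z => f (z + toC (h (σ n)))) g atTop T

/-- `f` is almost periodic on the tube domain `T_Ω`: its restriction to every tube `T_K`
with compact base `K ⊆ Ω` is almost periodic. -/
def APTube {m : ℕ} {E : Type*} [NormedAddCommGroup E]
    (f : (Fin m → ℂ) → E) (Ω : Set (Fin m → ℝ)) : Prop :=
  ∀ K : Set (Fin m → ℝ), IsCompact K → K ⊆ Ω → APOn f (tube K)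

/-- Almost periodicity of a function on `ℝ^m`: every sequence of shifts has a
uniformly convergent subsequence on all of `ℝ^m`. -/
def APRn {m : ℕ} {E : Type*} [NormedAddCommGroup E]
    (f : (Fin m → ℝ) → E) : Prop :=
  ∀ h : ℕ → (Fin m → ℝ), ∃ σ : ℕ → ℕ, StrictMono σ ∧ ∃ g : (Fin m → ℝ) → E,
    TendstoUniformly (fun n t => f (t + h (σ n))) g atTop

/-- Real directional derivative along a vector `v ∈ ℂ^m`. -/
def pdv {m : ℕ} (v : Fin m → ℂ) (φ : (Fin m → ℂ) → ℂ) : (Fin m → ℂ) → ℂ :=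
  fun z => fderiv ℝ φ z v

/-- `∂/∂x_j` (`x_j = Re z_j`). -/
def pdx {m : ℕ} (j : Fin m) : ((Fin m → ℂ) → ℂ) → (Fin m → ℂ) → ℂ :=
  pdv (Pi.single j 1)

/-- `∂/∂y_j` (`y_j = Im z_j`). -/
def pdy {m : ℕ} (j : Fin m) : ((Fin m → ℂ) → ℂ) → (Fin m → ℂ) → ℂ :=
  pdv (Pi.single j Complex.I)

/-- Wirtinger derivative `∂/∂z_k = (1/2)(∂/∂x_k - i ∂/∂y_k)`. -/
def dz {m : ℕ} (k : Fin m) (φ : (Fin m → ℂ) → ℂ) : (Fin m → ℂ) → ℂ :=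
  fun z => (1 / 2 : ℂ) * (pdx k φ z - Complex.I * pdy k φ z)

/-- Wirtinger derivative `∂/∂z̄_j = (1/2)(∂/∂x_j + i ∂/∂y_j)`. -/
def dzbar {m : ℕ} (j : Fin m) (φ : (Fin m → ℂ) → ℂ) : (Fin m → ℂ) → ℂ :=
  fun z => (1 / 2 : ℂ) * (pdx j φ z + Complex.I * pdy j φ z)

/-- The bilinear pairing `⟨z, l⟩ = ∑ j, z_j l_j` of `z ∈ ℂ^m` with `l ∈ ℝ^m`. -/
def bil {m : ℕ} (z : Fin m → ℂ) (l : Fin m → ℝ) : ℂ := ∑ j, z j * (l j : ℂ)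

section APxSection
open Complex Real Filter
namespace APx


/-- `q = e^{-2π}` -/
def qr : ℝ := Real.exp (-(2*Real.pi))

lemma qr_pos : 0 < qr := Real.exp_pos _
lemma qr_lt_half : qr < 1/2 := by
  have h1 : qr ≤ Real.exp (-1) := by
    apply Real.exp_le_exp.2
    nlinarith [Real.pi_gt_three]
  have h2 : Real.exp (-1) < 1/2 := by
    rw [Real.exp_neg]
    have : (2:ℝ) < Real.exp 1 := by
      have := Real.add_one_le_exp (1:ℝ)
      nlinarith [Real.exp_one_gt_d9]
    rw [inv_lt_comm₀ (Real.exp_pos 1) (by norm_num)]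
    linarith
  linarith
lemma qr_lt_one : qr < 1 := by linarith [qr_lt_half]

/-- `e2 w = e^{2πiw}` -/
def e2 (w : ℂ) : ℂ := Complex.exp (2*Real.pi*Complex.I*w)

lemma e2_ne_zero (w : ℂ) : e2 w ≠ 0 := Complex.exp_ne_zero _

lemma abs_e2 (w : ℂ) : ‖e2 w‖ = Real.exp (-(2*Real.pi)*w.im) := by
  rw [e2, Complex.norm_exp]
  congr 1
  simp [Complex.mul_re, Complex.mul_im]

lemma e2_add (w w' : ℂ) : e2 (w + w') = e2 w * e2 w' := by
  rw [e2, e2, e2, ← Complex.exp_add]; ring_nf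

lemma qr_c : (qr : ℂ) = Complex.exp (-(2*Real.pi)) := by
  rw [qr, Complex.ofReal_exp]; norm_num

lemma e2_I : e2 Complex.I = (qr:ℂ) := by
  rw [e2, qr_c]
  congr 1
  rw [mul_assoc, Complex.I_mul_I] 
  push_cast; ring

lemma e2_int (k : ℤ) : e2 (k:ℂ) = 1 := by
  rw [e2, Complex.exp_eq_one_iff]
  exact ⟨k, by push_cast; ring⟩

lemma e2_eq_one_iff (v : ℂ) : e2 v = 1 ↔ ∃ k : ℤ, v = (k:ℂ) := by
  rw [e2, Complex.exp_eq_one_iff]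
  constructor
  · rintro ⟨n, hn⟩
    refine ⟨n, ?_⟩
    have h2 : (2*(Real.pi:ℂ)*Complex.I : ℂ) ≠ 0 := by
      simp [Complex.I_ne_zero, Real.pi_ne_zero]
    have : 2*(Real.pi:ℂ)*Complex.I*v = 2*(Real.pi:ℂ)*Complex.I*(n:ℂ) := by
      rw [hn]; ring
    exact mul_left_cancel₀ h2 this
  · rintro ⟨k, rfl⟩
    exact ⟨k, by push_cast; ring⟩



/-! ### The infinite product pieces -/

/-- tail sum of logs, cutoff N, variable x -/
def tail (N : ℕ) (x : ℂ) : ℂ := ∑' n : ℕ, Complex.log (1 - (qr:ℂ)^(n+N+1) * x)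

/-- goodness of cutoff -/
def good (N : ℕ) (x : ℂ) : Prop := qr^(N+1) * ‖x‖ ≤ 1/2

lemma good_succ {N x} (h : good N x) : good (N+1) x := by
  unfold good at *
  have : qr^(N+1+1) * ‖x‖ ≤ qr^(N+1) * ‖x‖ := by
    apply mul_le_mul_of_nonneg_right _ (norm_nonneg x)
    exact pow_le_pow_of_le_one (le_of_lt qr_pos) (le_of_lt qr_lt_one) (by omega)
  linarith

lemma good_mono {N M x} (h : good N x) (hNM : N ≤ M) : good M x := by
  induction M, hNM using Nat.le_induction with
  | base => exact h
  | succ M hNM ih => exact good_succ ih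

lemma term_bound {N : ℕ} {x : ℂ} (h : good N x) (n : ℕ) :
    ‖(qr:ℂ)^(n+N+1) * x‖ ≤ qr^n * (1/2) := by
  rw [norm_mul, norm_pow, Complex.norm_real, Real.norm_eq_abs, abs_of_pos qr_pos]
  have : qr^(n+N+1) = qr^n * qr^(N+1) := by ring
  rw [this, mul_assoc]
  exact mul_le_mul_of_nonneg_left h (pow_nonneg (le_of_lt qr_pos) n)

lemma term_small {N : ℕ} {x : ℂ} (h : good N x) (n : ℕ) :
    ‖(qr:ℂ)^(n+N+1) * x‖ ≤ 1/2 := by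
  have := term_bound h n
  have h1 : qr^n * (1/2:ℝ) ≤ 1/2 := by
    have : qr^n ≤ 1 := pow_le_one₀ (le_of_lt qr_pos) (le_of_lt qr_lt_one)
    linarith
  linarith

lemma one_sub_ne {u : ℂ} (h : ‖u‖ ≤ 1/2) : (1:ℂ) - u ≠ 0 := by
  intro hc
  have : u = 1 := by linear_combination -hc
  rw [this] at h; simp at h; norm_num at h

lemma one_sub_mem_slitPlane {u : ℂ} (h : ‖u‖ ≤ 1/2) :
    (1:ℂ) - u ∈ Complex.slitPlane := by
  rw [Complex.mem_slitPlane_iff]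
  left
  have : |u.re| ≤ 1/2 := le_trans (Complex.abs_re_le_norm u) h
  have := abs_le.1 this
  simp only [Complex.sub_re, Complex.one_re]
  linarith

lemma norm_log_le {u : ℂ} (h : ‖u‖ ≤ 1/2) :
    ‖Complex.log (1 - u)‖ ≤ (3/2) * ‖u‖ := by
  have := Complex.norm_log_one_add_half_le_self (z := -u) (by simpa using h)
  simpa [sub_eq_add_neg] using this

lemma summable_tail {N : ℕ} {x : ℂ} (h : good N x) :
    Summable (fun n : ℕ => Complex.log (1 - (qr:ℂ)^(n+N+1) * x)) := by
  apply Summable.of_norm_bounded (g := fun n : ℕ => qr^n)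
  · exact summable_geometric_of_lt_one (le_of_lt qr_pos) qr_lt_one
  · intro n
    have hq : (0:ℝ) ≤ qr ^ n := pow_nonneg (le_of_lt qr_pos) n
    calc ‖Complex.log (1 - (qr:ℂ)^(n+N+1) * x)‖ ≤ (3/2) * ‖(qr:ℂ)^(n+N+1)*x‖ :=
          norm_log_le (term_small h n)
      _ ≤ qr^n := by
          have := term_bound h n; nlinarith [norm_nonneg ((qr:ℂ)^(n+N+1)*x)]

/-- partial product -/
def part (N : ℕ) (x : ℂ) : ℂ := ∏ n ∈ Finset.range N, (1 - (qr:ℂ)^(n+1) * x)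

/-- representation of A with cutoff N -/
def rep (N : ℕ) (x : ℂ) : ℂ := part N x * Complex.exp (tail N x)

/-- cutoff -/
def Nz (w : ℂ) : ℕ := ⌈-w.im⌉₊

lemma good_Nz (w : ℂ) : good (Nz w) (e2 w) := by
  unfold good
  rw [abs_e2]
  have h0 : (qr:ℝ)^(Nz w + 1) = Real.exp ((((Nz w + 1):ℕ):ℝ) * (-(2*Real.pi))) := by
    rw [qr, Real.exp_nat_mul]
  rw [h0, ← Real.exp_add]
  have h1 : (((Nz w + 1):ℕ):ℝ) * (-(2*Real.pi)) + -(2*Real.pi) * w.im ≤ -(2*Real.pi) := by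
    have h2 : -w.im ≤ (Nz w : ℝ) := Nat.le_ceil _
    push_cast
    nlinarith [Real.pi_pos]
  have := lt_of_le_of_lt (Real.exp_le_exp.2 h1) (a := Real.exp ((((Nz w + 1):ℕ):ℝ) * (-(2*Real.pi)) + -(2*Real.pi) * w.im)) qr_lt_half
  linarith

/-- the half-plane product function -/
def AA (w : ℂ) : ℂ := rep (Nz w) (e2 w)

lemma rep_succ {N : ℕ} {x : ℂ} (h : good N x) : rep N x = rep (N+1) x := by
  unfold rep part tail
  have hsum := summable_tail h
  have h0 : ∑' n : ℕ, Complex.log (1 - (qr:ℂ)^(n+N+1) * x)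
      = Complex.log (1 - (qr:ℂ)^(N+1) * x) + ∑' n : ℕ, Complex.log (1 - (qr:ℂ)^(n+(N+1)+1) * x) := by
    rw [hsum.tsum_eq_zero_add]
    congr 1
    · norm_num
    · apply tsum_congr; intro n; congr 2; ring
  rw [h0, Complex.exp_add, Complex.exp_log (one_sub_ne (by simpa using term_small h 0))]
  rw [Finset.prod_range_succ]
  ring

lemma rep_eq_of_good {N M : ℕ} {x : ℂ} (h : good N x) (hNM : N ≤ M) : rep N x = rep M x := by
  induction M, hNM using Nat.le_induction with
  | base => rfl
  | succ M hNM ih => rw [ih, rep_succ (good_mono h hNM)]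

lemma AA_eq_rep {N : ℕ} {w : ℂ} (h : good N (e2 w)) : AA w = rep N (e2 w) := by
  rcases le_total (Nz w) N with hle | hle
  · exact rep_eq_of_good (good_Nz w) hle
  · exact (rep_eq_of_good h hle).symm



/-- the theta-like function -/
def th (w : ℂ) : ℂ := (1 - e2 w) * AA w * AA (-w)

/-! ### shift identities -/

lemma e2_add_I (w : ℂ) : e2 (w + Complex.I) = (qr:ℂ) * e2 w := by
  rw [e2_add, e2_I]; ring

lemma AA_shift (w : ℂ) : (1 - (qr:ℂ) * e2 w) * AA (w + Complex.I) = AA w := by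
  set N := Nz w + Nz (w + Complex.I) with hN
  have hg1 : good N (e2 (w + Complex.I)) := good_mono (good_Nz _) (by omega)
  have hg2 : good (N+1) (e2 w) := by
    unfold good at *
    rw [e2_add_I, norm_mul, Complex.norm_real, Real.norm_eq_abs, abs_of_pos qr_pos] at hg1
    calc qr^(N+1+1) * ‖e2 w‖ = qr^(N+1) * (qr * ‖e2 w‖) := by ring
      _ ≤ 1/2 := hg1
  rw [AA_eq_rep hg1, AA_eq_rep hg2]
  unfold rep part tail
  rw [e2_add_I]
  have hprod : ∏ n ∈ Finset.range (N+1), (1 - (qr:ℂ)^(n+1) * e2 w)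
      = (∏ n ∈ Finset.range N, (1 - (qr:ℂ)^(n+1) * ((qr:ℂ) * e2 w))) * (1 - (qr:ℂ)^(0+1) * e2 w) := by
    rw [Finset.prod_range_succ']
    congr 1
    apply Finset.prod_congr rfl
    intro n _
    congr 1
    ring
  rw [hprod]
  have htail : (∑' n : ℕ, Complex.log (1 - (qr:ℂ)^(n+N+1) * ((qr:ℂ) * e2 w)))
      = ∑' n : ℕ, Complex.log (1 - (qr:ℂ)^(n+(N+1)+1) * e2 w) := by
    apply tsum_congr; intro n; congr 2; ring
  rw [htail]
  norm_num
  ring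

lemma e2_neg_add (w : ℂ) : e2 (-(w + Complex.I)) = (qr:ℂ)⁻¹ * e2 (-w) := by
  have : -(w + Complex.I) = -w + (- Complex.I) := by ring
  rw [this, e2_add]
  have h2 : e2 (-Complex.I) * e2 (Complex.I) = 1 := by
    rw [← e2_add]; simp [e2]
  rw [e2_I] at h2
  have hq : (qr:ℂ) ≠ 0 := by
    simp [Complex.ofReal_ne_zero]; exact ne_of_gt qr_pos
  field_simp at h2 ⊢
  linear_combination e2 (-w) * h2

lemma AA_neg_shift (w : ℂ) : AA (-(w + Complex.I)) = (1 - e2 (-w)) * AA (-w) := by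
  set N := Nz (-w) + Nz (-(w + Complex.I)) with hN
  have hq : (qr:ℂ) ≠ 0 := by
    simp [Complex.ofReal_ne_zero]; exact ne_of_gt qr_pos
  have hg1 : good N (e2 (-w)) := good_mono (good_Nz _) (by omega)
  have hg2 : good (N+1) (e2 (-(w + Complex.I))) := by
    unfold good at *
    rw [e2_neg_add, norm_mul, norm_inv, Complex.norm_real, Real.norm_eq_abs, abs_of_pos qr_pos]
    have : qr^(N+1+1) * (qr⁻¹ * ‖e2 (-w)‖) = qr^(N+1) * ‖e2 (-w)‖ := by
      have hq0 : (qr:ℝ) ≠ 0 := ne_of_gt qr_pos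
      field_simp
      ring
    rw [this]; exact hg1
  rw [AA_eq_rep hg2, AA_eq_rep hg1]
  unfold rep part tail
  rw [e2_neg_add]
  have hprod : ∏ n ∈ Finset.range (N+1), (1 - (qr:ℂ)^(n+1) * ((qr:ℂ)⁻¹ * e2 (-w)))
      = (1 - e2 (-w)) * ∏ n ∈ Finset.range N, (1 - (qr:ℂ)^(n+1) * e2 (-w)) := by
    rw [Finset.prod_range_succ']
    have h1 : ∀ n ∈ Finset.range N, (1 - (qr:ℂ)^(n+1+1) * ((qr:ℂ)⁻¹ * e2 (-w)))
        = 1 - (qr:ℂ)^(n+1) * e2 (-w) := by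
      intro n _
      congr 1
      field_simp
      ring
    rw [Finset.prod_congr rfl h1]
    have h0 : (1 - (qr:ℂ)^(0+1) * ((qr:ℂ)⁻¹ * e2 (-w))) = 1 - e2 (-w) := by
      field_simp
      ring
    rw [h0]
    ring
  rw [hprod]
  have htail : (∑' n : ℕ, Complex.log (1 - (qr:ℂ)^(n+(N+1)+1) * ((qr:ℂ)⁻¹ * e2 (-w))))
      = ∑' n : ℕ, Complex.log (1 - (qr:ℂ)^(n+N+1) * e2 (-w)) := by
    apply tsum_congr; intro n; congr 2
    field_simp
    ring
  rw [htail]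
  ring

lemma th_add_one (w : ℂ) : th (w + 1) = th w := by
  have he : e2 (w + 1) = e2 w := by
    rw [e2_add]
    have : e2 (1:ℂ) = 1 := by simpa using e2_int 1
    rw [this, mul_one]
  have hAA : ∀ v v' : ℂ, e2 v = e2 v' → v.im = v'.im → AA v = AA v' := by
    intro v v' h1 h2
    unfold AA Nz
    rw [h1, h2]
  unfold th
  rw [he, hAA (w+1) w he (by simp), hAA (-(w+1)) (-w - 1) (by ring_nf) (by simp)]
  have : AA (-w - 1) = AA (-w) := by
    apply hAA
    · have : -w - 1 = -w + (-1 : ℤ) := by push_cast; ring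
      rw [this, e2_add, e2_int]; ring
    · simp
  rw [this]

lemma th_add_I (w : ℂ) : th (w + Complex.I) = -(e2 (-w)) * th w := by
  unfold th
  have h1 : (1 - e2 (w + Complex.I)) = 1 - (qr:ℂ) * e2 w := by rw [e2_add_I]
  rw [h1, AA_neg_shift w]
  have key : (1 - (qr:ℂ) * e2 w) * AA (w + Complex.I) = AA w := AA_shift w
  have h2 : (1 - e2 (-w)) = -(e2 (-w)) * (1 - e2 w) := by
    have : e2 (-w) * e2 w = 1 := by rw [← e2_add]; simp [e2]
    linear_combination -this
  calc (1 - (qr:ℂ) * e2 w) * AA (w + Complex.I) * ((1 - e2 (-w)) * AA (-w))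
      = ((1 - (qr:ℂ) * e2 w) * AA (w + Complex.I)) * (1 - e2 (-w)) * AA (-w) := by ring
    _ = AA w * (1 - e2 (-w)) * AA (-w) := by rw [key]
    _ = AA w * (-(e2 (-w)) * (1 - e2 w)) * AA (-w) := by rw [← h2]
    _ = -(e2 (-w)) * ((1 - e2 w) * AA w * AA (-w)) := by ring



/-! ### zero sets -/

lemma qpow_mul_e2 (j : ℕ) (w : ℂ) : (qr:ℂ)^j * e2 w = e2 (w + j * Complex.I) := by
  induction j with
  | zero => simp
  | succ j ih =>
      have : w + (↑(j+1):ℂ) * Complex.I = (w + j * Complex.I) + Complex.I := by push_cast; ring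
      rw [this, e2_add_I, pow_succ, ← ih]
      ring

lemma factor_eq_zero_iff (n : ℕ) (w : ℂ) :
    (1 - (qr:ℂ)^(n+1) * e2 w) = 0 ↔ ∃ k : ℤ, w = (k:ℂ) - ((n:ℂ)+1) * Complex.I := by
  rw [sub_eq_zero, eq_comm, qpow_mul_e2, e2_eq_one_iff]
  constructor
  · rintro ⟨k, hk⟩
    exact ⟨k, by push_cast at hk ⊢; linear_combination hk⟩
  · rintro ⟨k, hk⟩
    exact ⟨k, by push_cast at hk ⊢; linear_combination hk⟩

lemma AA_eq_zero_iff (w : ℂ) :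
    AA w = 0 ↔ ∃ n : ℕ, ∃ k : ℤ, w = (k:ℂ) - ((n:ℂ)+1) * Complex.I := by
  constructor
  · intro h
    unfold AA rep at h
    rcases mul_eq_zero.1 h with h | h
    · unfold part at h
      rw [Finset.prod_eq_zero_iff] at h
      obtain ⟨n, _, hn⟩ := h
      obtain ⟨k, hk⟩ := (factor_eq_zero_iff n w).1 hn
      exact ⟨n, k, hk⟩
    · exact absurd h (Complex.exp_ne_zero _)
  · rintro ⟨n, k, rfl⟩
    have him : ((k:ℂ) - ((n:ℂ)+1) * Complex.I).im = -((n:ℝ)+1) := by simp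
    have hNz : Nz ((k:ℂ) - ((n:ℂ)+1) * Complex.I) = n + 1 := by
      unfold Nz
      rw [him]
      norm_num
      rw [show ((n:ℝ)+1) = ((n+1 : ℕ):ℝ) by push_cast; ring, Nat.ceil_natCast]
    unfold AA rep part
    rw [hNz]
    apply mul_eq_zero_of_left
    apply Finset.prod_eq_zero (Finset.self_mem_range_succ n)
    rw [factor_eq_zero_iff]
    exact ⟨k, rfl⟩

lemma abs_e2_ne_one {w : ℂ} (h : w.im ≠ 0) : ‖e2 w‖ ≠ 1 := by
  rw [abs_e2]
  intro hc
  rw [Real.exp_eq_one_iff] at hc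
  have : w.im = 0 := by
    have hpi := Real.pi_pos
    rcases mul_eq_zero.1 hc with h1 | h1
    · nlinarith
    · exact h1
  exact h this

lemma one_sub_e2_ne {w : ℂ} (h : w.im ≠ 0) : (1:ℂ) - e2 w ≠ 0 := by
  intro hc
  have : e2 w = 1 := by linear_combination -hc
  have h2 := abs_e2_ne_one h
  rw [this] at h2
  simp at h2

lemma th_eq_zero_iff (w : ℂ) :
    th w = 0 ↔ ∃ p k : ℤ, w = (p:ℂ) + (k:ℂ) * Complex.I := by
  constructor
  · intro h
    unfold th at h
    rcases mul_eq_zero.1 h with h | h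
    · rcases mul_eq_zero.1 h with h | h
      · rw [sub_eq_zero, eq_comm, e2_eq_one_iff] at h
        obtain ⟨k, rfl⟩ := h
        exact ⟨k, 0, by push_cast; ring⟩
      · obtain ⟨n, k, rfl⟩ := (AA_eq_zero_iff w).1 h
        exact ⟨k, -(n+1), by push_cast; ring⟩
    · rw [AA_eq_zero_iff] at h
      obtain ⟨n, k, hk⟩ := h
      refine ⟨-k, (n+1), ?_⟩
      have : w = -((k:ℂ) - ((n:ℂ)+1) * Complex.I) := by linear_combination -hk
      rw [this]; push_cast; ring
  · rintro ⟨p, k, rfl⟩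
    unfold th
    rcases lt_trichotomy k 0 with hk | hk | hk
    · apply mul_eq_zero_of_left
      apply mul_eq_zero_of_right
      rw [AA_eq_zero_iff]
      refine ⟨(-k-1).toNat, p, ?_⟩
      have h1 : ((-k-1).toNat : ℂ) = ((-k-1 : ℤ) : ℂ) := by
        norm_cast
        omega
      rw [h1]; push_cast; ring
    · subst hk
      apply mul_eq_zero_of_left
      apply mul_eq_zero_of_left
      rw [sub_eq_zero, eq_comm]
      rw [show ((p:ℂ) + (0:ℤ) * Complex.I) = ((p:ℤ):ℂ) by push_cast; ring]
      exact e2_int p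
    · apply mul_eq_zero_of_right
      rw [AA_eq_zero_iff]
      refine ⟨(k-1).toNat, -p, ?_⟩
      have h1 : ((k-1).toNat : ℂ) = ((k-1 : ℤ) : ℂ) := by
        norm_cast
        omega
      rw [h1]; push_cast; ring



/-! ### differentiability -/

lemma hasDerivAt_e2 (w : ℂ) : HasDerivAt e2 (2*(Real.pi:ℂ)*Complex.I * e2 w) w := by
  have h1 : HasDerivAt (fun w : ℂ => 2*(Real.pi:ℂ)*Complex.I*w) (2*(Real.pi:ℂ)*Complex.I) w := by
    simpa using (hasDerivAt_id w).const_mul (2*(Real.pi:ℂ)*Complex.I)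
  unfold e2
  convert h1.cexp using 1
  · rfl
  · ring

lemma e2_differentiable : Differentiable ℂ e2 := fun w => (hasDerivAt_e2 w).differentiableAt

/-- the open set where cutoff N works -/
def SN (N : ℕ) : Set ℂ := {w | qr^(N+1) * ‖e2 w‖ < 1/2}

lemma SN_open (N : ℕ) : IsOpen (SN N) := by
  apply isOpen_lt (f := fun w => qr^(N+1) * ‖e2 w‖) (g := fun _ => (1:ℝ)/2)
  · exact (continuous_const.mul (continuous_norm.comp e2_differentiable.continuous))
  · exact continuous_const

lemma SN_good {N : ℕ} {w : ℂ} (h : w ∈ SN N) : good N (e2 w) := le_of_lt h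

lemma tail_diffOn (N : ℕ) : DifferentiableOn ℂ (fun w => tail N (e2 w)) (SN N) := by
  unfold tail
  apply differentiableOn_tsum_of_summable_norm
    (u := fun n : ℕ => qr^n)
    (hu := summable_geometric_of_lt_one (le_of_lt qr_pos) qr_lt_one)
  · intro n
    apply DifferentiableOn.clog
    · apply DifferentiableOn.const_sub
      exact (e2_differentiable.const_mul _).differentiableOn
    · intro w hw
      exact one_sub_mem_slitPlane (term_small (SN_good hw) n)
  · exact SN_open N
  · intro n w hw
    have h1 := norm_log_le (term_small (SN_good hw) n)
    have h2 := term_bound (SN_good hw) n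
    have hq : (0:ℝ) ≤ qr ^ n := pow_nonneg (le_of_lt qr_pos) n
    calc ‖Complex.log (1 - (qr:ℂ)^(n+N+1) * e2 w)‖
        ≤ (3/2) * ‖(qr:ℂ)^(n+N+1) * e2 w‖ := h1
      _ ≤ qr^n := by nlinarith [norm_nonneg ((qr:ℂ)^(n+N+1) * e2 w)]

lemma part_differentiable (N : ℕ) : Differentiable ℂ (fun w => part N (e2 w)) := by
  unfold part
  apply Differentiable.fun_finsetProd
  intro n _
  exact differentiable_const _ |>.sub (e2_differentiable.const_mul _)

lemma rep_diffOn (N : ℕ) : DifferentiableOn ℂ (fun w => rep N (e2 w)) (SN N) := by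
  unfold rep
  exact ((part_differentiable N).differentiableOn).mul ((tail_diffOn N).cexp)

lemma mem_SN (w : ℂ) : w ∈ SN (Nz w) := by
  unfold SN Nz
  simp only [Set.mem_setOf_eq]
  rw [abs_e2]
  have h0 : (qr:ℝ)^(⌈-w.im⌉₊ + 1) = Real.exp ((((⌈-w.im⌉₊ + 1):ℕ):ℝ) * (-(2*Real.pi))) := by
    rw [qr, Real.exp_nat_mul]
  rw [h0, ← Real.exp_add]
  have h2 : -w.im ≤ (⌈-w.im⌉₊ : ℝ) := Nat.le_ceil _
  have h1 : (((⌈-w.im⌉₊ + 1):ℕ):ℝ) * (-(2*Real.pi)) + -(2*Real.pi) * w.im ≤ -(2*Real.pi) := by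
    push_cast
    nlinarith [Real.pi_pos]
  exact lt_of_le_of_lt (Real.exp_le_exp.2 h1) qr_lt_half

lemma AA_eqOn (N : ℕ) : Set.EqOn AA (fun w => rep N (e2 w)) (SN N) := by
  intro w hw
  exact AA_eq_rep (SN_good hw)

lemma AA_differentiable : Differentiable ℂ AA := by
  intro w₀
  have h1 : SN (Nz w₀) ∈ nhds w₀ := (SN_open _).mem_nhds (mem_SN w₀)
  have h2 : AA =ᶠ[nhds w₀] (fun w => rep (Nz w₀) (e2 w)) :=
    Filter.eventuallyEq_of_mem h1 (AA_eqOn (Nz w₀))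
  rw [h2.differentiableAt_iff]
  exact ((rep_diffOn (Nz w₀)).differentiableAt h1)

lemma th_differentiable : Differentiable ℂ th := by
  unfold th
  apply Differentiable.mul
  · apply Differentiable.mul
    · exact (differentiable_const _).sub e2_differentiable
    · exact AA_differentiable
  · exact AA_differentiable.comp differentiable_neg



/-! ### nonvanishing of derivatives at the zeros -/

lemma deriv_mul_left_zero {f g : ℂ → ℂ} {a : ℂ} (hf : DifferentiableAt ℂ f a)
    (hg : DifferentiableAt ℂ g a) (h0 : f a = 0) :
    deriv (fun w => f w * g w) a = deriv f a * g a := by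
  rw [deriv_fun_mul hf hg, h0]
  ring

lemma AA_ne_zero_of_im {w : ℂ} (h : ∀ n : ℕ, w.im ≠ -((n:ℝ)+1)) : AA w ≠ 0 := by
  intro hc
  obtain ⟨n, k, rfl⟩ := (AA_eq_zero_iff w).1 hc
  exact h n (by simp)

lemma qr_ne_zero_c : (qr:ℂ) ≠ 0 := by
  simp only [ne_eq, Complex.ofReal_eq_zero]
  exact ne_of_gt qr_pos

lemma two_pi_I_ne : (2*(Real.pi:ℂ)*Complex.I) ≠ 0 := by
  simp [Complex.I_ne_zero, Real.pi_ne_zero]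

lemma hasDerivAt_factor (c : ℂ) (w : ℂ) :
    HasDerivAt (fun w => 1 - c * e2 w) (-(c * (2*(Real.pi:ℂ)*Complex.I * e2 w))) w := by
  simpa using ((hasDerivAt_e2 w).const_mul c).const_sub 1

lemma deriv_AA_ne (n : ℕ) (k : ℤ) : deriv AA ((k:ℂ) - ((n:ℂ)+1) * Complex.I) ≠ 0 := by
  set a : ℂ := (k:ℂ) - ((n:ℂ)+1) * Complex.I with ha
  set N : ℕ := n + 2 with hNdef
  have him : a.im = -((n:ℝ)+1) := by simp [ha]
  have haS : a ∈ SN N := by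
    unfold SN
    simp only [Set.mem_setOf_eq]
    rw [abs_e2, him]
    have h0 : (qr:ℝ)^(N+1) = Real.exp ((((N+1):ℕ):ℝ) * (-(2*Real.pi))) := by
      rw [qr, Real.exp_nat_mul]
    rw [h0, ← Real.exp_add]
    have h1 : (((N+1):ℕ):ℝ) * (-(2*Real.pi)) + -(2*Real.pi) * -((n:ℝ)+1) ≤ -(2*Real.pi) := by
      push_cast [hNdef]
      nlinarith [Real.pi_pos]
    exact lt_of_le_of_lt (Real.exp_le_exp.2 h1) qr_lt_half
  have hmem : SN N ∈ nhds a := (SN_open N).mem_nhds haS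
  have heq : AA =ᶠ[nhds a] (fun w => rep N (e2 w)) :=
    Filter.eventuallyEq_of_mem hmem (AA_eqOn N)
  rw [heq.deriv_eq]
  -- the vanishing factor is index n
  have hfac0 : (1 - (qr:ℂ)^(n+1) * e2 a) = 0 := by
    rw [factor_eq_zero_iff]
    exact ⟨k, rfl⟩
  -- part N (e2 w) = factor n * rest
  have hnN : n ∈ Finset.range N := by simp [hNdef]
  have hsplit : (fun w => rep N (e2 w))
      = fun w => (1 - (qr:ℂ)^(n+1) * e2 w) *
          ((∏ j ∈ (Finset.range N).erase n, (1 - (qr:ℂ)^(j+1) * e2 w)) * Complex.exp (tail N (e2 w))) := by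
    funext w
    unfold rep part
    rw [← Finset.mul_prod_erase (Finset.range N) _ hnN]
    ring
  rw [hsplit]
  have hdf := hasDerivAt_factor ((qr:ℂ)^(n+1)) a
  have hrest_diff : DifferentiableAt ℂ
      (fun w => (∏ j ∈ (Finset.range N).erase n, (1 - (qr:ℂ)^(j+1) * e2 w)) * Complex.exp (tail N (e2 w))) a := by
    apply DifferentiableAt.mul
    · apply DifferentiableAt.fun_finsetProd
      intro j _
      exact (differentiable_const _).sub (e2_differentiable.const_mul _) |>.differentiableAt
    · exact ((tail_diffOn N).differentiableAt hmem).cexp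
  rw [deriv_mul_left_zero hdf.differentiableAt hrest_diff hfac0, hdf.deriv]
  apply mul_ne_zero
  · apply neg_ne_zero.2
    exact mul_ne_zero (pow_ne_zero _ qr_ne_zero_c) (mul_ne_zero two_pi_I_ne (e2_ne_zero a))
  apply mul_ne_zero
  · apply Finset.prod_ne_zero_iff.2
    intro j hj
    intro hc
    obtain ⟨k', hk'⟩ := (factor_eq_zero_iff j a).1 hc
    have : a.im = -((j:ℝ)+1) := by rw [hk']; simp
    rw [him] at this
    have : (n:ℝ) = (j:ℝ) := by linarith
    have : n = j := by exact_mod_cast this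
    subst this
    simp at hj
  · exact Complex.exp_ne_zero _

lemma deriv_th_ne (p k : ℤ) : deriv th ((p:ℂ) + (k:ℂ) * Complex.I) ≠ 0 := by
  set a : ℂ := (p:ℂ) + (k:ℂ) * Complex.I with ha
  have him : a.im = (k:ℝ) := by simp [ha]
  have hdiff1 : DifferentiableAt ℂ (fun w : ℂ => 1 - e2 w) a :=
    ((differentiable_const (1:ℂ)).sub e2_differentiable).differentiableAt
  have hdiffneg : Differentiable ℂ (fun w : ℂ => AA (-w)) := AA_differentiable.comp differentiable_neg
  rcases lt_trichotomy k 0 with hk | hk | hk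
  · -- AA a = 0
    set n : ℕ := (-k-1).toNat with hn
    have hkn : (k:ℝ) = -((n:ℝ)+1) := by
      have : ((-k-1:ℤ):ℝ) = ((n:ℕ):ℝ) := by norm_cast; omega
      push_cast at this ⊢
      linarith
    have hAA0 : AA a = 0 := by
      rw [AA_eq_zero_iff]
      refine ⟨n, p, ?_⟩
      rw [ha]
      rw [Complex.ext_iff]
      constructor <;> simp [hkn]
    have hsplit : th = fun w => AA w * ((1 - e2 w) * AA (-w)) := by
      funext w; unfold th; ring
    rw [hsplit, deriv_mul_left_zero (AA_differentiable a)
      (hdiff1.fun_mul (hdiffneg a)) hAA0]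
    apply mul_ne_zero
    · have haeq : a = ((p:ℤ):ℂ) - ((n:ℂ)+1) * Complex.I := by
        rw [Complex.ext_iff]
        constructor <;> simp [ha, hkn]
      rw [haeq]
      exact deriv_AA_ne n p
    apply mul_ne_zero
    · apply one_sub_e2_ne
      rw [him, hkn]
      intro hcc
      nlinarith [Nat.cast_nonneg (α := ℝ) n]
    · apply AA_ne_zero_of_im
      intro n' hc
      simp only [Complex.neg_im, him, hkn] at hc
      nlinarith [Nat.cast_nonneg (α := ℝ) n, Nat.cast_nonneg (α := ℝ) n']
  · -- k = 0 : the (1 - e2) factor vanishes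
    subst hk
    have hfac0 : (1:ℂ) - e2 a = 0 := by
      have : a = ((p:ℤ):ℂ) := by rw [ha]; push_cast; ring
      rw [this, e2_int]
      ring
    have hsplit : th = fun w => (1 - e2 w) * (AA w * AA (-w)) := by
      funext w; unfold th; ring
    rw [hsplit, deriv_mul_left_zero hdiff1
      ((AA_differentiable a).fun_mul (hdiffneg a)) hfac0]
    have hd := (hasDerivAt_factor 1 a)
    have hd' : deriv (fun w : ℂ => 1 - e2 w) a = -(2*(Real.pi:ℂ)*Complex.I * e2 a) := by
      have := (hasDerivAt_factor 1 a).deriv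
      simpa using this
    rw [hd']
    apply mul_ne_zero
    · exact neg_ne_zero.2 (mul_ne_zero two_pi_I_ne (e2_ne_zero a))
    apply mul_ne_zero
    · apply AA_ne_zero_of_im
      intro n' hc
      rw [him] at hc
      push_cast at hc
      nlinarith [Nat.cast_nonneg (α := ℝ) n']
    · apply AA_ne_zero_of_im
      intro n' hc
      simp only [Complex.neg_im, him] at hc
      push_cast at hc
      nlinarith [Nat.cast_nonneg (α := ℝ) n']
  · -- k > 0 : the AA (-w) factor vanishes
    set n : ℕ := (k-1).toNat with hn
    have hkn : (k:ℝ) = (n:ℝ)+1 := by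
      have : ((k-1:ℤ):ℝ) = ((n:ℕ):ℝ) := by norm_cast; omega
      push_cast at this ⊢
      linarith
    have hAA0 : AA (-a) = 0 := by
      rw [AA_eq_zero_iff]
      refine ⟨n, -p, ?_⟩
      rw [ha, Complex.ext_iff]
      constructor <;> simp [hkn]
    have hsplit : th = fun w => AA (-w) * ((1 - e2 w) * AA w) := by
      funext w; unfold th; ring
    rw [hsplit, deriv_mul_left_zero (hdiffneg a)
      (hdiff1.fun_mul (AA_differentiable a)) hAA0]
    apply mul_ne_zero
    · have hcomp : HasDerivAt (fun w : ℂ => AA (-w)) (deriv AA (-a) * (-1)) a := by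
        have h1 : HasDerivAt AA (deriv AA (-a)) (-a) := (AA_differentiable (-a)).hasDerivAt
        have h2 : HasDerivAt (fun w : ℂ => -w) (-1 : ℂ) a := by
          exact hasDerivAt_neg' a
        exact h1.comp a h2
      rw [hcomp.deriv]
      have hnegeq : -a = ((-p:ℤ):ℂ) - ((n:ℂ)+1) * Complex.I := by
        rw [ha, Complex.ext_iff]
        constructor <;> simp [hkn]
      rw [hnegeq]
      exact mul_ne_zero (deriv_AA_ne n (-p)) (by norm_num)
    apply mul_ne_zero
    · apply one_sub_e2_ne
      rw [him, hkn]
      intro hcc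
      nlinarith [Nat.cast_nonneg (α := ℝ) n]
    · apply AA_ne_zero_of_im
      intro n' hc
      rw [him, hkn] at hc
      nlinarith [Nat.cast_nonneg (α := ℝ) n, Nat.cast_nonneg (α := ℝ) n']



/-! ### the doubly periodic modulus function -/

def PP (v : ℂ) : ℝ := ‖th v‖ * Real.exp (-Real.pi * v.im^2 + Real.pi * v.im)

lemma PP_cont : Continuous PP := by
  apply Continuous.mul
  · exact continuous_norm.comp th_differentiable.continuous
  · apply Real.continuous_exp.comp
    apply Continuous.add
    · exact (continuous_const.mul ((Complex.continuous_im).pow 2))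
    · exact continuous_const.mul Complex.continuous_im

lemma PP_nonneg (v : ℂ) : 0 ≤ PP v :=
  mul_nonneg (norm_nonneg _) (le_of_lt (Real.exp_pos _))

lemma PP_periodic_one : Function.Periodic PP 1 := by
  intro v
  unfold PP
  rw [th_add_one]
  simp

lemma PP_periodic_I : Function.Periodic PP Complex.I := by
  intro v
  unfold PP
  rw [th_add_I, norm_mul, norm_neg, abs_e2]
  simp only [Complex.neg_im, Complex.add_im, Complex.I_im, Complex.one_im]
  rw [mul_right_comm, ← Real.exp_add, mul_comm]
  congr 2
  ring

lemma PP_period_int (v : ℂ) (p k : ℤ) : PP (v + (p:ℂ) + (k:ℂ) * Complex.I) = PP v := by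
  have h1 := PP_periodic_one.int_mul p
  have h2 := PP_periodic_I.int_mul k
  have e1 : PP (v + (p:ℂ) + (k:ℂ)*Complex.I) = PP (v + (p:ℂ)) := by
    have := h2 (v + (p:ℂ))
    simpa using this
  have e2' : PP (v + (p:ℂ)) = PP v := by
    have := h1 v
    simpa using this
  rw [e1, e2']

lemma PP_uniform : ∀ ε : ℝ, 0 < ε → ∃ δ : ℝ, 0 < δ ∧
    ∀ u v : ℂ, dist u v < δ → |PP u - PP v| < ε := by
  intro ε hε
  have hB : IsCompact (Metric.closedBall (0:ℂ) 5) := isCompact_closedBall _ _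
  have hUC := hB.uniformContinuousOn_of_continuous PP_cont.continuousOn
  rw [Metric.uniformContinuousOn_iff] at hUC
  obtain ⟨δ₀, hδ₀, hδ⟩ := hUC ε hε
  refine ⟨min δ₀ 1, by positivity, ?_⟩
  intro u v huv
  have huv1 : dist u v < δ₀ := lt_of_lt_of_le huv (min_le_left _ _)
  have huv2 : dist u v < 1 := lt_of_lt_of_le huv (min_le_right _ _)
  set lam : ℂ := (⌊u.re⌋ : ℂ) + (⌊u.im⌋ : ℂ) * Complex.I with hlam
  have hu' : PP (u - lam) = PP u := by
    have := PP_period_int (u - lam) ⌊u.re⌋ ⌊u.im⌋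
    rw [show u - lam + (⌊u.re⌋:ℂ) + (⌊u.im⌋:ℂ)*Complex.I = u by rw [hlam]; ring] at this
    exact this.symm
  have hv' : PP (v - lam) = PP v := by
    have := PP_period_int (v - lam) ⌊u.re⌋ ⌊u.im⌋
    rw [show v - lam + (⌊u.re⌋:ℂ) + (⌊u.im⌋:ℂ)*Complex.I = v by rw [hlam]; ring] at this
    exact this.symm
  have hure : (u - lam).re = u.re - ⌊u.re⌋ := by simp [hlam]
  have huim : (u - lam).im = u.im - ⌊u.im⌋ := by simp [hlam]
  have hunorm : ‖u - lam‖ ≤ 2 := by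
    calc ‖u - lam‖ ≤ |(u-lam).re| + |(u-lam).im| := Complex.norm_le_abs_re_add_abs_im _
      _ ≤ 2 := by
          rw [hure, huim, _root_.abs_of_nonneg (by linarith [Int.floor_le u.re]),
            _root_.abs_of_nonneg (by linarith [Int.floor_le u.im])]
          have := Int.lt_floor_add_one u.re
          have := Int.lt_floor_add_one u.im
          linarith
  have huball : u - lam ∈ Metric.closedBall (0:ℂ) 5 := by
    rw [Metric.mem_closedBall, dist_zero_right]
    linarith
  have hdistuv : dist (u - lam) (v - lam) = dist u v := dist_sub_right u v lam
  have hvball : v - lam ∈ Metric.closedBall (0:ℂ) 5 := by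
    rw [Metric.mem_closedBall, dist_zero_right]
    have htri : ‖v - lam‖ ≤ ‖u - lam‖ + dist (v - lam) (u - lam) := by
      have := dist_triangle (v - lam) (u - lam) 0
      simp only [dist_zero_right] at this ⊢
      linarith [this]
    rw [dist_comm, hdistuv] at htri
    linarith
  have := hδ (u - lam) huball (v - lam) hvball (by rw [hdistuv]; exact huv1)
  rw [hu', hv'] at this
  rw [Real.dist_eq] at this
  exact this



/-! ### dividing out the divisor -/

lemma dslope_entire {f : ℂ → ℂ} (hf : Differentiable ℂ f) (a : ℂ) :
    Differentiable ℂ (dslope f a) := by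
  have : DifferentiableOn ℂ (dslope f a) Set.univ := by
    rw [Complex.differentiableOn_dslope (by simp : (Set.univ : Set ℂ) ∈ nhds a)]
    exact hf.differentiableOn
  intro w
  exact (this w (Set.mem_univ w)).differentiableAt (by simp)

lemma exists_unit {g : ℂ → ℂ} (hg : Differentiable ℂ g)
    (hz : ∀ w, g w = 0 ↔ th w = 0)
    (hd : ∀ w, th w = 0 → deriv g w ≠ 0) :
    ∃ v : ℂ → ℂ, Differentiable ℂ v ∧ (∀ w, v w ≠ 0) ∧ ∀ w, g w = v w * th w := by
  have hthd : ∀ w, th w = 0 → deriv th w ≠ 0 := by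
    intro w hw
    obtain ⟨p, k, rfl⟩ := (th_eq_zero_iff w).1 hw
    exact deriv_th_ne p k
  refine ⟨fun w => if th w = 0 then deriv g w / deriv th w else g w / th w, ?_, ?_, ?_⟩
  · -- differentiability
    intro a
    by_cases ha : th a = 0
    · -- near a, the function agrees with dslope g a / dslope th a
      have hda : dslope th a a ≠ 0 := by
        rw [dslope_same]
        exact hthd a ha
      have hcont : ContinuousAt (dslope th a) a :=
        ((dslope_entire th_differentiable a) a).continuousAt
      have hne : ∀ᶠ w in nhds a, dslope th a w ≠ 0 :=
        hcont.eventually_ne hda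
      have heq : (fun w => if th w = 0 then deriv g w / deriv th w else g w / th w)
          =ᶠ[nhds a] (fun w => dslope g a w / dslope th a w) := by
        filter_upwards [hne] with w hw
        by_cases hwa : w = a
        · subst hwa
          rw [if_pos ha, dslope_same, dslope_same]
        · have hth : th w = (w - a) * dslope th a w := by
            have := sub_smul_dslope th a w
            rw [smul_eq_mul] at this
            rw [this, ha]
            ring
          have hgw : g w = (w - a) * dslope g a w := by
            have := sub_smul_dslope g a w
            rw [smul_eq_mul] at this
            rw [this, (hz a).2 ha]
            ring
          have hthw : th w ≠ 0 := by
            rw [hth]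
            exact mul_ne_zero (sub_ne_zero.2 hwa) hw
          rw [if_neg hthw, hgw, hth]
          rw [mul_div_mul_left _ _ (sub_ne_zero.2 hwa)]
      rw [heq.differentiableAt_iff]
      exact ((dslope_entire hg a) a).div ((dslope_entire th_differentiable a) a) hda
    · have hne : ∀ᶠ w in nhds a, th w ≠ 0 :=
        (th_differentiable a).continuousAt.eventually_ne ha
      have heq : (fun w => if th w = 0 then deriv g w / deriv th w else g w / th w)
          =ᶠ[nhds a] (fun w => g w / th w) := by
        filter_upwards [hne] with w hw
        rw [if_neg hw]
      rw [heq.differentiableAt_iff]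
      exact (hg a).div (th_differentiable a) ha
  · -- nonvanishing
    intro w
    by_cases hw : th w = 0
    · simp only [if_pos hw]
      exact div_ne_zero (hd w hw) (hthd w hw)
    · simp only [if_neg hw]
      exact div_ne_zero (fun hc => hw ((hz w).1 hc)) hw
  · -- factorization
    intro w
    by_cases hw : th w = 0
    · simp only [if_pos hw]
      rw [hw, mul_zero, (hz w).2 hw]
    · simp only [if_neg hw]
      rw [div_mul_cancel₀]
      exact hw






/-- real part computation for the exponential correction factor -/
lemma re_E (t s r : ℝ) :
    ((Real.pi:ℂ) * (Complex.I * ((t:ℂ)+Complex.I) * ((s:ℂ)+(r:ℂ)*Complex.I)^2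
        + ((s:ℂ)+(r:ℂ)*Complex.I))).re
      = -Real.pi * ((((t:ℂ)+Complex.I) * ((s:ℂ)+(r:ℂ)*Complex.I)).im)^2
        + Real.pi * ((((t:ℂ)+Complex.I) * ((s:ℂ)+(r:ℂ)*Complex.I)).im)
        + (Real.pi*(t^2+1)*r^2 - Real.pi*t*r) := by
  simp only [Complex.mul_re, Complex.mul_im, Complex.add_re, Complex.add_im, Complex.I_re,
    Complex.I_im, Complex.ofReal_re, Complex.ofReal_im, pow_two]
  ring


end APx
end APxSection


/-- Let `g` be entire on `ℂ` with zero set exactly `ℤ + iℤ`, all zeros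
simple. If `μ ∈ ℝ^m`, `μ ≠ 0`, `t ∈ ℝ` and `λ = tμ`, then there exists an entire function
`F` on `ℂ^m` with the same divisor as `z ↦ g(⟨z,λ⟩ + i⟨z,μ⟩)` such that `|F|` is almost
periodic on every tube `T_K` with compact base `K ⊆ ℝ^m`. -/
theorem divisor_proportional_has_almost_periodic_modulus
    {m : ℕ} (g : ℂ → ℂ) (hg : Differentiable ℂ g)
    (hzero : ∀ w : ℂ, g w = 0 ↔ ∃ p q : ℤ, w = (p : ℂ) + (q : ℂ) * Complex.I)
    (hsimple : ∀ p q : ℤ, deriv g ((p : ℂ) + (q : ℂ) * Complex.I) ≠ 0)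
    (μ : Fin m → ℝ) (hμ : μ ≠ 0) (t : ℝ) (l : Fin m → ℝ) (hl : l = t • μ) :
    ∃ F u : (Fin m → ℂ) → ℂ, Differentiable ℂ F ∧ Differentiable ℂ u ∧
      (∀ z, u z ≠ 0) ∧
      (∀ z, g (bil z l + Complex.I * bil z μ) = u z * F z) ∧
      APTube (fun z => ‖F z‖) Set.univ := by
  classical
  set α : ℂ := (t:ℂ) + Complex.I with hα
  -- the complex-linear coordinate
  set ζ : (Fin m → ℂ) → ℂ := fun z => bil z μ with hζ
  have harg : ∀ z, bil z l + Complex.I * bil z μ = α * ζ z := by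
    intro z
    subst hl
    show bil z (t • μ) + Complex.I * bil z μ = ((t:ℂ) + Complex.I) * bil z μ
    unfold bil
    have h1 : ∑ j, z j * (((t • μ) j : ℝ):ℂ) = (t:ℂ) * ∑ j, z j * ((μ j : ℝ):ℂ) := by
      rw [Finset.mul_sum]
      apply Finset.sum_congr rfl
      intro j _
      simp only [Pi.smul_apply, smul_eq_mul]
      push_cast
      ring
    rw [h1]
    ring
  -- differentiability of ζ
  have hζdiff : Differentiable ℂ ζ := by
    apply Differentiable.fun_sum
    intro j _
    exact (ContinuousLinearMap.proj j : ((Fin m) → ℂ) →L[ℂ] ℂ).differentiable.mul_const _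
  -- re/im of ζ
  have hζdecomp : ∀ z : Fin m → ℂ,
      ζ z = ((∑ j, (z j).re * μ j : ℝ):ℂ) + ((∑ j, (z j).im * μ j : ℝ):ℂ) * Complex.I := by
    intro z
    rw [Complex.ext_iff]
    constructor
    · simp [hζ, bil, Complex.re_sum, Complex.mul_re]
    · simp [hζ, bil, Complex.im_sum, Complex.mul_im]
  -- zero set of g matches th
  have hz : ∀ w, g w = 0 ↔ APx.th w = 0 := by
    intro w
    rw [hzero, APx.th_eq_zero_iff]
  have hd : ∀ w, APx.th w = 0 → deriv g w ≠ 0 := by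
    intro w hw
    obtain ⟨p, k, rfl⟩ := (APx.th_eq_zero_iff w).1 hw
    exact hsimple p k
  obtain ⟨v, hvdiff, hvne, hvfac⟩ := APx.exists_unit hg hz hd
  -- the exponential correction
  set E : (Fin m → ℂ) → ℂ :=
    fun z => (Real.pi:ℂ) * (Complex.I * α * (ζ z)^2 + ζ z) with hE
  have hEdiff : Differentiable ℂ E := by
    apply Differentiable.const_mul
    exact (((hζdiff.pow 2).const_mul _).add hζdiff)
  refine ⟨fun z => APx.th (α * ζ z) * Complex.exp (E z),
    fun z => v (α * ζ z) * Complex.exp (-(E z)), ?_, ?_, ?_, ?_, ?_⟩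
  · exact (APx.th_differentiable.comp (hζdiff.const_mul α)).mul hEdiff.cexp
  · exact (hvdiff.comp (hζdiff.const_mul α)).mul hEdiff.neg.cexp
  · intro z
    exact mul_ne_zero (hvne _) (Complex.exp_ne_zero _)
  · intro z
    rw [harg z, hvfac (α * ζ z)]
    rw [show ∀ a b c d : ℂ, a * b * (c * d) = (a * c) * (b * d) from fun a b c d => by ring]
    rw [← Complex.exp_add]
    simp
  -- almost periodicity
  intro K hK _
  intro h
  -- the modulus identity
  set X : (Fin m → ℝ) → ℝ :=
    fun y => Real.exp (Real.pi*(t^2+1)*(∑ j, y j * μ j)^2 - Real.pi*t*(∑ j, y j * μ j)) with hX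
  have hXpos : ∀ y, 0 < X y := fun y => Real.exp_pos _
  have key : ∀ z : Fin m → ℂ,
      ‖APx.th (α * ζ z) * Complex.exp (E z)‖
        = APx.PP (α * ζ z) * X (fun j => (z j).im) := by
    intro z
    rw [norm_mul, Complex.norm_exp]
    unfold APx.PP
    rw [mul_assoc, ← Real.exp_add]
    congr 2
    set s : ℝ := ∑ j, (z j).re * μ j with hs
    set r : ℝ := ∑ j, (z j).im * μ j with hr
    have hdec := hζdecomp z
    rw [hE]
    simp only
    rw [hdec, ← hs, ← hr]
    simp only [hα]
    rw [APx.re_E t s r]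
  -- bound for X on the compact base
  obtain ⟨C₀, hC₀⟩ := hK.exists_bound_of_continuousOn
    (f := X) (by
      apply Continuous.continuousOn
      apply Real.continuous_exp.comp
      apply Continuous.sub
      · apply Continuous.mul continuous_const
        exact (continuous_finset_sum _ fun j _ => (continuous_apply j).mul continuous_const).pow 2
      · apply Continuous.mul continuous_const
        exact continuous_finset_sum _ fun j _ => (continuous_apply j).mul continuous_const)
  set C : ℝ := max C₀ 0 with hC
  have hCX : ∀ y ∈ K, X y ≤ C := by
    intro y hy
    have := hC₀ y hy
    rw [Real.norm_eq_abs, abs_of_pos (hXpos y)] at this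
    exact le_trans this (le_max_left _ _)
  have hC0 : 0 ≤ C := le_max_right _ _
  -- the sequence of translation parameters
  set c : ℕ → ℝ := fun n => ∑ j, h n j * μ j with hc
  set ξ : ℕ → ℂ := fun n => α * (c n : ℂ) with hξ
  set ρ : ℕ → ℂ := fun n => ξ n - (⌊(ξ n).re⌋:ℂ) - (⌊(ξ n).im⌋:ℂ)*Complex.I with hρ
  have hρball : ∀ n, ρ n ∈ Metric.closedBall (0:ℂ) 2 := by
    intro n
    rw [Metric.mem_closedBall, dist_zero_right]
    have hre : (ρ n).re = (ξ n).re - ⌊(ξ n).re⌋ := by simp [hρ]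
    have him : (ρ n).im = (ξ n).im - ⌊(ξ n).im⌋ := by simp [hρ]
    calc ‖ρ n‖ ≤ |(ρ n).re| + |(ρ n).im| := Complex.norm_le_abs_re_add_abs_im _
      _ ≤ 2 := by
          rw [hre, him, _root_.abs_of_nonneg (by linarith [Int.floor_le (ξ n).re]),
            _root_.abs_of_nonneg (by linarith [Int.floor_le (ξ n).im])]
          have := Int.lt_floor_add_one (ξ n).re
          have := Int.lt_floor_add_one (ξ n).im
          linarith
  obtain ⟨ρlim, _, σ, hσmono, hσtend⟩ :=
    (isCompact_closedBall (0:ℂ) 2).tendsto_subseq hρball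
  refine ⟨σ, hσmono, fun z => APx.PP (α * ζ z + ρlim) * X (fun j => (z j).im), ?_⟩
  rw [Metric.tendstoUniformlyOn_iff]
  intro ε hε
  obtain ⟨δ, hδpos, hδ⟩ := APx.PP_uniform (ε/(C+1)) (by positivity)
  have hev : ∀ᶠ n in atTop, dist (ρ (σ n)) ρlim < δ :=
    (Metric.tendsto_nhds.1 hσtend) δ hδpos
  filter_upwards [hev] with n hn
  intro z hz
  -- shift computations
  have hζshift : ζ (z + toC (h (σ n))) = ζ z + (c (σ n) : ℂ) := by
    show bil (z + toC (h (σ n))) μ = bil z μ + (c (σ n) : ℂ)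
    unfold bil
    rw [hc]
    push_cast
    rw [← Finset.sum_add_distrib]
    apply Finset.sum_congr rfl
    intro j _
    show (z j + (h (σ n) j : ℂ)) * (μ j : ℂ) = _
    ring
  have himshift : (fun j => ((z + toC (h (σ n))) j).im) = fun j => (z j).im := by
    funext j
    show (z j + ((h (σ n) j : ℝ):ℂ)).im = (z j).im
    simp
  have hval : ‖APx.th (α * ζ (z + toC (h (σ n)))) * Complex.exp (E (z + toC (h (σ n))))‖
      = APx.PP (α * ζ z + ρ (σ n)) * X (fun j => (z j).im) := by
    rw [key, himshift, hζshift]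
    congr 1
    have : α * (ζ z + (c (σ n):ℂ)) = α * ζ z + ξ (σ n) := by rw [hξ]; ring
    rw [this]
    have hsplit : α * ζ z + ξ (σ n)
        = (α * ζ z + ρ (σ n)) + (⌊(ξ (σ n)).re⌋:ℂ) + (⌊(ξ (σ n)).im⌋:ℂ)*Complex.I := by
      rw [hρ]; ring
    rw [hsplit, APx.PP_period_int]
  rw [hval]
  rw [Real.dist_eq]
  have hfactor : APx.PP (α * ζ z + ρlim) * X (fun j => (z j).im)
      - APx.PP (α * ζ z + ρ (σ n)) * X (fun j => (z j).im)
      = (APx.PP (α * ζ z + ρlim) - APx.PP (α * ζ z + ρ (σ n))) * X (fun j => (z j).im) := by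
    ring
  rw [hfactor, abs_mul, _root_.abs_of_pos (hXpos _)]
  have hdist : dist (α * ζ z + ρlim) (α * ζ z + ρ (σ n)) < δ := by
    rw [dist_add_left]
    rw [dist_comm]
    exact hn
  have hPP := hδ _ _ hdist
  have hXle : X (fun j => (z j).im) ≤ C := hCX _ hz
  have hXpos' := hXpos (fun j => (z j).im)
  calc |APx.PP (α * ζ z + ρlim) - APx.PP (α * ζ z + ρ (σ n))| * X (fun j => (z j).im)
      ≤ (ε/(C+1)) * C := by
        apply mul_le_mul (le_of_lt hPP) hXle (le_of_lt hXpos')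
        positivity
    _ < ε := by
        rw [div_mul_eq_mul_div, div_lt_iff₀ (by linarith)]
        nlinarith
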